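/- Let G be a countable group and A a finite set with |A| ≥ 2. For every ε > 0, the set of ε-minimal shifts is open in the space 𝒮; consequently the set of shifts S ∈ 𝒮 on which the G-action is minimal is a G_δ subset of 𝒮. -/

import Mathlib

open scoped Pointwise

/-- The left-translation action of `G` on configurations: `(g • s)(h) = s (g⁻¹ * h)`. -/
def shiftAct {G A : Type*} [Group G] (g : G) (s : G → A) : G → A :=
  fun h => s (g⁻¹ * h)

/-- A shift: a nonempty, closed, `G`-invariant subset of the full shift `A^G` (with the
product topology and the left-translation action). -/
def IsShift {G A : Type*} [Group G] [TopologicalSpace A] (S : Set (G → A)) : Prop :=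
  S.Nonempty ∧ IsClosed S ∧ ∀ s ∈ S, ∀ g : G, shiftAct g s ∈ S

/-- A shift `S ⊆ A^G` is strongly irreducible if there is a finite `X ⊆ G` containing the
identity such that for all `E₁, E₂ ⊆ G` with `E₁X ∩ E₂X = ∅` and all `s₁, s₂ ∈ S` there is
`s ∈ S` agreeing with `s₁` on `E₁` and with `s₂` on `E₂`. -/
def StronglyIrreducible {G A : Type*} [Group G] (S : Set (G → A)) : Prop :=
  ∃ X : Finset G, (1 : G) ∈ X ∧
    ∀ E₁ E₂ : Set G, (E₁ * (X : Set G)) ∩ (E₂ * (X : Set G)) = ∅ →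
      ∀ s₁ ∈ S, ∀ s₂ ∈ S, ∃ s ∈ S, (∀ a ∈ E₁, s a = s₁ a) ∧ (∀ a ∈ E₂, s a = s₂ a)

open scoped Classical in
/-- The metric on `A^G` induced by an enumeration `G = {g₁, g₂, …}` (here `e n = g_{n+1}`):
`d(s, t) = 1 / min {n ≥ 1 : s gₙ ≠ t gₙ}` for `s ≠ t`, and `d(s, s) = 0`. -/
noncomputable def confDist {G A : Type*} (e : ℕ → G) (s t : G → A) : ℝ :=
  if s = t then 0
  else 1 / (((sInf {n : ℕ | s (e n) ≠ t (e n)} : ℕ) : ℝ) + 1)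

/-- The space of shifts in `A^G`. -/
abbrev ShiftSpace (G A : Type*) [Group G] [TopologicalSpace A] : Type _ :=
  {S : Set (G → A) // IsShift S}

/-- Two sets of configurations agree on `F ⊆ G` if they have the same sets of restrictions
to `F`. -/
def AgreeOn {G A : Type*} (F : Set G) (S T : Set (G → A)) : Prop :=
  ∀ p : G → A, (∃ s ∈ S, ∀ x ∈ F, s x = p x) ↔ (∃ t ∈ T, ∀ x ∈ F, t x = p x)

open scoped Classical in
/-- The metric on the space of shifts: `d(S, T) = 1/(n+1)` where `n` is the largest index
such that `S` and `T` agree on `{g₁, …, gₙ}` (with `e k = g_{k+1}`), and `d(S, T) = 0` if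
`S = T`. -/
noncomputable def shiftSpaceDist {G A : Type*} [Group G] [TopologicalSpace A] (e : ℕ → G)
    (S T : ShiftSpace G A) : ℝ :=
  if S = T then 0
  else 1 / (((sSup {n : ℕ | AgreeOn {g : G | ∃ k < n, e k = g} S.1 T.1} : ℕ) : ℝ) + 1)

/-- The metric topology on the space of shifts, generated by the open balls of the metric
`shiftSpaceDist`. -/
noncomputable def shiftSpaceTopology (G A : Type*) [Group G] [TopologicalSpace A]
    (e : ℕ → G) : TopologicalSpace (ShiftSpace G A) :=
  TopologicalSpace.generateFrom
    {U : Set (ShiftSpace G A) |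
      ∃ (S : ShiftSpace G A) (ε : ℝ), 0 < ε ∧ U = {T | shiftSpaceDist e S T < ε}}

/-- The space `𝒮`: the closure, in the space of shifts, of the strongly irreducible shifts,
with the `|A|` singleton (constant-configuration) shifts removed. -/
def scriptS (G A : Type*) [Group G] [TopologicalSpace A] (e : ℕ → G) :
    Set (ShiftSpace G A) :=
  @closure _ (shiftSpaceTopology G A e) {S : ShiftSpace G A | StronglyIrreducible S.1} \
    {S : ShiftSpace G A | ∃ a : A, S.1 = {fun _ => a}}

/-- The subspace topology on `𝒮`. -/
noncomputable def scriptSTopology (G A : Type*) [Group G] [TopologicalSpace A]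
    (e : ℕ → G) : TopologicalSpace ↥(scriptS G A e) :=
  TopologicalSpace.induced Subtype.val (shiftSpaceTopology G A e)

/-- The action of `G` on a shift `S` is `ε`-minimal if for all `s, t ∈ S` there is `g ∈ G`
with `d(g • s, t) < ε`. -/
def EpsMinimal {G A : Type*} [Group G] (e : ℕ → G) (ε : ℝ) (S : Set (G → A)) : Prop :=
  ∀ s ∈ S, ∀ t ∈ S, ∃ g : G, confDist e (shiftAct g s) t < ε


section Auxiliary

lemma confDist_lt_iff {G A : Type*} (e : ℕ → G) (he : Function.Surjective e)
    {ε : ℝ} (hε : 0 < ε) (s t : G → A) :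
    confDist e s t < ε ↔ ∀ n < Nat.floor (1/ε), s (e n) = t (e n) := by
  classical
  unfold confDist
  split_ifs with h
  · subst h; simp [hε]
  · set W := {n : ℕ | s (e n) ≠ t (e n)} with hW
    have hWne : W.Nonempty := by
      obtain ⟨g, hg⟩ := Function.ne_iff.mp h
      obtain ⟨k, rfl⟩ := he g
      exact ⟨k, hg⟩
    have hmem := Nat.sInf_mem hWne
    set m := sInf W with hm
    have hmpos : (0:ℝ) < (m:ℝ) + 1 := by positivity
    constructor
    · intro hlt n hn
      by_contra hne
      have h1 : m ≤ n := Nat.sInf_le hne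
      have h2 : (1:ℝ)/ε < (m:ℝ) + 1 := by
        rw [div_lt_iff₀ hε]
        have := (div_lt_iff₀ hmpos).mp hlt
        nlinarith
      have h3 : Nat.floor (1/ε) ≤ m := by
        have := (Nat.floor_lt (by positivity)).mpr
          (by exact_mod_cast h2 : (1:ℝ)/ε < ((m+1 : ℕ) : ℝ))
        omega
      omega
    · intro hall
      have hfm : Nat.floor (1/ε) ≤ m := by
        by_contra hc
        push_neg at hc
        exact hmem (hall m hc)
      have h2 : (1:ℝ)/ε < (m:ℝ) + 1 := by
        calc (1:ℝ)/ε < (Nat.floor (1/ε) : ℝ) + 1 := Nat.lt_floor_add_one _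
        _ ≤ (m:ℝ) + 1 := by exact_mod_cast add_le_add_left (Nat.cast_le.mpr hfm) 1
      rw [div_lt_iff₀ hmpos]
      have := (div_lt_iff₀ hε).mp h2
      nlinarith

lemma agreeOn_mono {G A : Type*} {F F' : Set G} (hFF : F' ⊆ F) {S T : Set (G → A)}
    (h : AgreeOn F S T) : AgreeOn F' S T := by
  intro p
  constructor
  · rintro ⟨s, hs, hsp⟩
    obtain ⟨t, ht, hts⟩ := (h s).mp ⟨s, hs, fun _ _ => rfl⟩
    exact ⟨t, ht, fun x hx => (hts x (hFF hx)).trans (hsp x hx)⟩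
  · rintro ⟨t, ht, htp⟩
    obtain ⟨s, hs, hst⟩ := (h t).mpr ⟨t, ht, fun _ _ => rfl⟩
    exact ⟨s, hs, fun x hx => (hst x (hFF hx)).trans (htp x hx)⟩

lemma exists_finset_witness {G A : Type} [Group G] [Fintype A] [TopologicalSpace A]
    [DiscreteTopology A]
    (e : ℕ → G) (N : ℕ) {S : Set (G → A)} (hS : IsClosed S)
    (hmin : ∀ s ∈ S, ∀ t ∈ S, ∃ g : G, ∀ n < N, s (g⁻¹ * e n) = t (e n)) :
    ∃ K : Finset G, ∀ s ∈ S, ∀ t ∈ S, ∃ g ∈ K, ∀ n < N, s (g⁻¹ * e n) = t (e n) := by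
  set U : G → Set ((G → A) × (G → A)) :=
    fun g => {p | ∀ n < N, p.1 (g⁻¹ * e n) = p.2 (e n)} with hU
  have hUopen : ∀ g, IsOpen (U g) := by
    intro g
    have : U g = ⋂ n ∈ Finset.range N, {p : (G → A) × (G → A) | p.1 (g⁻¹ * e n) = p.2 (e n)} := by
      ext p; simp [hU]
    rw [this]
    refine isOpen_biInter_finset fun n _ => ?_
    have hc : Continuous (fun p : (G → A) × (G → A) => (p.1 (g⁻¹ * e n), p.2 (e n))) :=
      ((continuous_apply _).comp continuous_fst).prodMk ((continuous_apply _).comp continuous_snd)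
    exact (isOpen_discrete {q : A × A | q.1 = q.2}).preimage hc
  have hcomp : IsCompact (S ×ˢ S) := (hS.isCompact).prod hS.isCompact
  have hcover : S ×ˢ S ⊆ ⋃ g, U g := by
    rintro ⟨s, t⟩ ⟨hs, ht⟩
    obtain ⟨g, hg⟩ := hmin s hs t ht
    exact Set.mem_iUnion.mpr ⟨g, hg⟩
  obtain ⟨K, hK⟩ := hcomp.elim_finite_subcover U hUopen hcover
  refine ⟨K, fun s hs t ht => ?_⟩
  obtain ⟨g, hgK, hg⟩ := Set.mem_iUnion₂.mp (hK (Set.mk_mem_prod hs ht))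
  exact ⟨g, hgK, hg⟩

lemma agreeOn_of_dist_lt {G A : Type*} [Group G] [TopologicalSpace A]
    (e : ℕ → G) (L : ℕ) (S T : ShiftSpace G A)
    (h : shiftSpaceDist e S T < 1/((L:ℝ)+1)) :
    AgreeOn {g : G | ∃ k < L, e k = g} S.1 T.1 := by
  classical
  by_cases hST : S = T
  · subst hST; intro p; rfl
  · unfold shiftSpaceDist at h
    rw [if_neg hST] at h
    set W := {n : ℕ | AgreeOn {g : G | ∃ k < n, e k = g} S.1 T.1} with hWdef
    have h0 : 0 ∈ W := by
      intro p
      constructor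
      · rintro ⟨s, _, _⟩
        obtain ⟨t, ht⟩ := T.2.1
        exact ⟨t, ht, fun x hx => by obtain ⟨k, hk, _⟩ := hx; omega⟩
      · rintro ⟨t, _, _⟩
        obtain ⟨s, hs⟩ := S.2.1
        exact ⟨s, hs, fun x hx => by obtain ⟨k, hk, _⟩ := hx; omega⟩
    by_cases hbdd : BddAbove W
    · have hsupmem : sSup W ∈ W := Nat.sSup_mem ⟨0, h0⟩ hbdd
      obtain ⟨M, hM⟩ : ∃ M : ℕ, M = sSup W := ⟨sSup W, rfl⟩
      rw [← hM] at h hsupmem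
      have hLlt : (L:ℝ) < (M:ℝ) := by
        have hp : (0:ℝ) < (M:ℝ) + 1 := by positivity
        have hq : (0:ℝ) < (L:ℝ) + 1 := by positivity
        have := (div_lt_iff₀ hp).mp h
        rw [div_mul_eq_mul_div, lt_div_iff₀ hq] at this
        nlinarith
      have hL : L ≤ M := by exact_mod_cast hLlt.le
      exact agreeOn_mono (fun x hx => by obtain ⟨k, hk, hke⟩ := hx; exact ⟨k, by omega, hke⟩)
        hsupmem
    · obtain ⟨m, hmW, hLm⟩ := (not_bddAbove_iff.mp hbdd) L
      exact agreeOn_mono (fun x hx => by obtain ⟨k, hk, hke⟩ := hx; exact ⟨k, by omega, hke⟩) hmW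

end Auxiliary

/-- For every `ε > 0` the set of `ε`-minimal shifts is open in `𝒮`; consequently the set of
shifts in `𝒮` on which the `G`-action is minimal (equivalently, `ε`-minimal for every
`ε > 0`) is a `G_δ` subset of `𝒮`. -/
theorem epsMinimal_isOpen_and_minimal_isGδ
    (G : Type) [Group G] [Countable G]
    (A : Type) [Fintype A] [TopologicalSpace A] [DiscreteTopology A]
    (hA : 2 ≤ Fintype.card A)
    (e : ℕ → G) (he : Function.Surjective e) :
    (∀ ε : ℝ, 0 < ε →
      @IsOpen ↥(scriptS G A e) (scriptSTopology G A e)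
        {S : ↥(scriptS G A e) | EpsMinimal e ε S.1.1}) ∧
    @IsGδ ↥(scriptS G A e) (scriptSTopology G A e)
      {S : ↥(scriptS G A e) | ∀ ε : ℝ, 0 < ε → EpsMinimal e ε S.1.1} := by
  have part1 : ∀ ε : ℝ, 0 < ε →
      @IsOpen (ShiftSpace G A) (shiftSpaceTopology G A e)
        {T : ShiftSpace G A | EpsMinimal e ε T.1} := by
    intro ε hε
    letI := shiftSpaceTopology G A e
    rw [isOpen_iff_forall_mem_open]
    intro S hS
    set N := Nat.floor (1/ε) with hN
    -- finite witness set
    have hmin : ∀ s ∈ S.1, ∀ t ∈ S.1, ∃ g : G, ∀ n < N, s (g⁻¹ * e n) = t (e n) := by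
      intro s hs t ht
      obtain ⟨g, hg⟩ := hS s hs t ht
      exact ⟨g, fun n hn => (confDist_lt_iff e he hε _ t).mp hg n hn⟩
    obtain ⟨K, hK⟩ := exists_finset_witness e N S.2.2.1 hmin
    -- window size L
    set L : ℕ := N + ((K ×ˢ Finset.range N).sup
      fun p => Function.surjInv he (p.1⁻¹ * e p.2) + 1) with hL
    have hNL : N ≤ L := Nat.le_add_right _ _
    have hmemF : ∀ g ∈ K, ∀ n < N, (g⁻¹ * e n) ∈ {x : G | ∃ k < L, e k = x} := by
      intro g hg n hn
      refine ⟨Function.surjInv he (g⁻¹ * e n), ?_, Function.surjInv_eq he _⟩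
      have : Function.surjInv he (g⁻¹ * e n) + 1 ≤
          (K ×ˢ Finset.range N).sup fun p => Function.surjInv he (p.1⁻¹ * e p.2) + 1 :=
        Finset.le_sup (b := (g, n)) (f := fun p : G × ℕ => Function.surjInv he (p.1⁻¹ * e p.2) + 1)
          (Finset.mem_product.mpr ⟨hg, Finset.mem_range.mpr hn⟩)
      omega
    refine ⟨{T | shiftSpaceDist e S T < 1/((L:ℝ)+1)}, ?_, ?_, ?_⟩
    · -- ball is contained in the set of ε-minimal shifts
      intro T hT
      have hAg : AgreeOn {x : G | ∃ k < L, e k = x} S.1 T.1 :=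
        agreeOn_of_dist_lt e L S T hT
      intro s' hs' t' ht'
      obtain ⟨s, hsS, hss'⟩ := (hAg s').mpr ⟨s', hs', fun _ _ => rfl⟩
      obtain ⟨t, htS, htt'⟩ := (hAg t').mpr ⟨t', ht', fun _ _ => rfl⟩
      obtain ⟨g, hgK, hg⟩ := hK s hsS t htS
      refine ⟨g, (confDist_lt_iff e he hε _ t').mpr fun n hn => ?_⟩
      show s' (g⁻¹ * e n) = t' (e n)
      have h1 : s (g⁻¹ * e n) = s' (g⁻¹ * e n) := hss' _ (hmemF g hgK n hn)
      have h2 : t (e n) = t' (e n) := htt' _ ⟨n, by omega, rfl⟩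
      rw [← h1, ← h2]
      exact hg n hn
    · -- ball is open
      exact TopologicalSpace.isOpen_generateFrom_of_mem
        ⟨S, 1/((L:ℝ)+1), by positivity, rfl⟩
    · -- center is in the ball
      show shiftSpaceDist e S S < 1/((L:ℝ)+1)
      unfold shiftSpaceDist
      rw [if_pos rfl]
      positivity
  constructor
  · intro ε hε
    letI := shiftSpaceTopology G A e
    rw [scriptSTopology]
    exact @isOpen_induced _ _ (shiftSpaceTopology G A e) Subtype.val _ (part1 ε hε)
  · letI := scriptSTopology G A e
    have heq : {S : ↥(scriptS G A e) | ∀ ε : ℝ, 0 < ε → EpsMinimal e ε S.1.1} =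
        ⋂ n : ℕ, {S : ↥(scriptS G A e) | EpsMinimal e (1/((n:ℝ)+1)) S.1.1} := by
      ext S
      simp only [Set.mem_iInter, Set.mem_setOf_eq]
      constructor
      · intro h n
        exact h _ (by positivity)
      · intro h ε hε
        obtain ⟨n, hn⟩ := exists_nat_gt (1/ε)
        intro s hs t ht
        obtain ⟨g, hg⟩ := h n s hs t ht
        refine ⟨g, hg.trans_le ?_⟩
        rw [div_le_iff₀ (by positivity)]
        have : (1:ℝ)/ε < (n:ℝ) + 1 := hn.trans (by linarith)
        have := (div_lt_iff₀ hε).mp this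
        nlinarith
    rw [heq]
    refine IsGδ.iInter fun n => ?_
    have hopen : @IsOpen ↥(scriptS G A e) (scriptSTopology G A e)
        {S : ↥(scriptS G A e) | EpsMinimal e (1/((n:ℝ)+1)) S.1.1} := by
      rw [scriptSTopology]
      exact @isOpen_induced _ _ (shiftSpaceTopology G A e) Subtype.val _ (part1 _ (by positivity))
    exact hopen.isGδ
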